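/- Let R be a Noetherian ring and P < Q prime ideals of R with P strictly contained in Q. Then |R/Q|_r < |R/P|_r, where |·|_r denotes the Gabriel–Rentschler Krull dimension of right modules. In particular, if |R/P|_r = |R|_r then P is a minimal prime. -/

import Mathlib

universe u

/-- `DevLE α o`: the Gabriel–Rentschler deviation of the preorder `α` is at most `o`. -/
def DevLE (α : Type u) [Preorder α] (o : Ordinal.{u}) : Prop :=
  ∀ f : ℕ → α, (∀ n, f (n + 1) ≤ f n) →
    ∃ N : ℕ, ∀ n, N ≤ n →
      f n ≤ f (n + 1) ∨
        ∃ o' : {x : Ordinal.{u} // x < o},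
          DevLE {y : α // f (n + 1) ≤ y ∧ y ≤ f n} o'.1
termination_by o
decreasing_by exact o'.2

/-- The deviation (Krull dimension) of a preorder, as the least ordinal bound. -/
noncomputable def dev (α : Type u) [Preorder α] : Ordinal.{u} := sInf {o | DevLE α o}

/-- The left Krull dimension of a ring: deviation of the lattice of left ideals. -/
noncomputable def lKdim (R : Type u) [Ring R] : Ordinal.{u} := dev (Submodule R R)

/-- The right Krull dimension of a ring: deviation of the lattice of right ideals. -/
noncomputable def rKdim (R : Type u) [Ring R] : Ordinal.{u} := dev (Submodule Rᵐᵒᵖ R)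

/-- Krull dimension of a right ideal `J` as a right module: deviation of `[⊥, J]`. -/
noncomputable def rIdealDim (R : Type u) [Ring R] (J : Submodule Rᵐᵒᵖ R) : Ordinal.{u} :=
  dev {I : Submodule Rᵐᵒᵖ R // I ≤ J}

/-- Krull dimension of a left ideal `J` as a left module. -/
noncomputable def lIdealDim (R : Type u) [Ring R] (J : Submodule R R) : Ordinal.{u} :=
  dev {I : Submodule R R // I ≤ J}

/-- A ring is right Krull homogeneous if every nonzero right ideal has full dimension. -/
def RightKH (R : Type u) [Ring R] : Prop :=
  ∀ J : Submodule Rᵐᵒᵖ R, J ≠ ⊥ → rIdealDim R J = rKdim R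

def LeftKH (R : Type u) [Ring R] : Prop :=
  ∀ J : Submodule R R, J ≠ ⊥ → lIdealDim R J = lKdim R

/-- A two-sided ideal is prime if it is proper and `aRb ⊆ P` implies `a ∈ P` or `b ∈ P`. -/
def IsPrimeT {R : Type u} [Ring R] (P : TwoSidedIdeal R) : Prop :=
  (P : Set R) ≠ Set.univ ∧ ∀ a b : R, (∀ r : R, a * r * b ∈ P) → a ∈ P ∨ b ∈ P

/-- Right Krull dimension of the quotient ring `R/I`. -/
noncomputable def rKdimQ {R : Type u} [Ring R] (I : TwoSidedIdeal R) : Ordinal.{u} :=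
  rKdim I.ringCon.Quotient

noncomputable def lKdimQ {R : Type u} [Ring R] (I : TwoSidedIdeal R) : Ordinal.{u} :=
  lKdim I.ringCon.Quotient

/-- `Λ(R)`: primes with full right Krull dimension. -/
def Lam (R : Type u) [Ring R] : Set (TwoSidedIdeal R) :=
  {P | IsPrimeT P ∧ rKdimQ P = rKdim R}

/-- `Λ'(R)`: primes with full left Krull dimension. -/
def Lam' (R : Type u) [Ring R] : Set (TwoSidedIdeal R) :=
  {P | IsPrimeT P ∧ lKdimQ P = lKdim R}

/-- A two-sided ideal viewed as a right ideal. -/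
def rightIdealOf {R : Type u} [Ring R] (I : TwoSidedIdeal R) : Submodule Rᵐᵒᵖ R where
  carrier := I
  zero_mem' := I.zero_mem
  add_mem' := I.add_mem
  smul_mem' := fun r x hx => I.mul_mem_right x r.unop hx

/-- A two-sided ideal viewed as a left ideal. -/
def leftIdealOf {R : Type u} [Ring R] (I : TwoSidedIdeal R) : Submodule R R where
  carrier := I
  zero_mem' := I.zero_mem
  add_mem' := I.add_mem
  smul_mem' := fun r x hx => I.mul_mem_left r x hx

/-- The right annihilator of a set, as a right ideal. -/
def rAnnIdeal (R : Type u) [Ring R] (S : Set R) : Submodule Rᵐᵒᵖ R where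
  carrier := {x | ∀ y ∈ S, y * x = 0}
  zero_mem' := by intro y _; simp
  add_mem' := by intro a b ha hb y hy; rw [mul_add, ha y hy, hb y hy, add_zero]
  smul_mem' := by
    intro r x hx y hy
    show y * (x * r.unop) = 0
    rw [← mul_assoc, hx y hy, zero_mul]

/-- The left annihilator of a set. -/
def lAnnSet (R : Type u) [Ring R] (S : Set R) : Set R := {x | ∀ y ∈ S, x * y = 0}

section Toolkit
/-- transfer a DevLE bound along an order-reflecting map -/
theorem DevLE.of_embed {o : Ordinal.{u}} : ∀ {α β : Type u} [Preorder α] [Preorder β]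
    (g : α → β), (∀ a b : α, a ≤ b ↔ g a ≤ g b) → DevLE β o → DevLE α o := by
  intro α β _ _ g hg hβ
  rw [DevLE] at hβ ⊢
  intro f hf
  obtain ⟨N, hN⟩ := hβ (fun n => g (f n)) (fun n => (hg _ _).1 (hf n))
  refine ⟨N, fun n hn => ?_⟩
  rcases hN n hn with h | ⟨o', h⟩
  · exact Or.inl ((hg _ _).2 h)
  · refine Or.inr ⟨o', ?_⟩
    exact DevLE.of_embed (o := o'.1)
      (fun y => (⟨g y.1, (hg _ _).1 y.2.1, (hg _ _).1 y.2.2⟩ :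
        {y : β // g (f (n+1)) ≤ y ∧ y ≤ g (f n)}))
      (fun a b => hg a.1 b.1) h
termination_by o
decreasing_by exact o'.2

theorem dev_le {α : Type u} [Preorder α] {o : Ordinal.{u}} (h : DevLE α o) : dev α ≤ o :=
  csInf_le' h

theorem devLE_dev {α : Type u} [Preorder α] (h : ∃ o, DevLE α o) : DevLE α (dev α) :=
  csInf_mem h

theorem hasDev_of_embed {α β : Type u} [Preorder α] [Preorder β]
    (g : α → β) (hg : ∀ a b : α, a ≤ b ↔ g a ≤ g b) (h : ∃ o, DevLE β o) :
    ∃ o, DevLE α o := ⟨_, DevLE.of_embed g hg (devLE_dev h)⟩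

theorem dev_le_dev {α β : Type u} [Preorder α] [Preorder β]
    (g : α → β) (hg : ∀ a b : α, a ≤ b ↔ g a ≤ g b) (h : ∃ o, DevLE β o) :
    dev α ≤ dev β := dev_le (DevLE.of_embed g hg (devLE_dev h))

theorem chain_le {α : Type u} [Preorder α] (f : ℕ → α) (hf : ∀ n, f (n+1) ≤ f n)
    {i j : ℕ} (h : i ≤ j) : f j ≤ f i := by
  induction j with
  | zero => rw [Nat.le_zero.mp h]
  | succ k IHk =>
    rcases Nat.lt_or_ge i (k+1) with h' | h'
    · exact le_trans (hf k) (IHk (by omega))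
    · rw [le_antisymm h h']

/-- existence of deviation for a well-founded (Noetherian) partial order -/
theorem hasDev_interval {α : Type u} [PartialOrder α] [WellFoundedGT α] (a : α) :
    ∃ o, DevLE {x : α // a ≤ x} o := by
  induction a using WellFoundedGT.induction with
  | _ a IH =>
  classical
  refine ⟨(⨆ b : {b : α // a < b}, dev {x : α // b.1 ≤ x}) + 1, ?_⟩
  rw [DevLE]
  intro f hf
  by_cases hc : ∃ n, (f (n+1)).1 = a
  · obtain ⟨n, hn⟩ := hc
    refine ⟨n+1, fun m hm => Or.inl ?_⟩
    have h1 : f m ≤ f (n+1) := chain_le f hf hm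
    have h2 : f (n+1) ≤ f (m+1) := by
      show (f (n+1)).1 ≤ (f (m+1)).1
      rw [hn]; exact (f (m+1)).2
    exact le_trans h1 h2
  · push_neg at hc
    refine ⟨0, fun n _ => Or.inr ?_⟩
    have hlt : a < (f (n+1)).1 := lt_of_le_of_ne (f (n+1)).2 (Ne.symm (hc n))
    have hD : ∃ o, DevLE {x : α // (f (n+1)).1 ≤ x} o := IH _ hlt
    have hle : dev {x : α // (f (n+1)).1 ≤ x} ≤
        ⨆ b : {b : α // a < b}, dev {x : α // b.1 ≤ x} :=
      le_ciSup (Ordinal.bddAbove_range _) (⟨(f (n+1)).1, hlt⟩ : {b : α // a < b})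
    refine ⟨⟨dev {x : α // (f (n+1)).1 ≤ x}, lt_of_le_of_lt hle ?_⟩, ?_⟩
    · rw [Ordinal.add_one_eq_succ]; exact Order.lt_succ _
    · exact DevLE.of_embed (fun y => (⟨y.1.1, y.2.1⟩ : {x : α // (f (n+1)).1 ≤ x}))
        (fun a b => Iff.rfl) (devLE_dev hD)

theorem hasDev {α : Type u} [PartialOrder α] [WellFoundedGT α] : ∃ o, DevLE α o := by
  refine ⟨(⨆ a : α, dev {x : α // a ≤ x}) + 1, ?_⟩
  rw [DevLE]
  intro f hf
  refine ⟨0, fun n _ => Or.inr ?_⟩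
  have hD := hasDev_interval (f (n+1))
  have hle : dev {x : α // f (n+1) ≤ x} ≤ ⨆ a : α, dev {x : α // a ≤ x} :=
    le_ciSup (Ordinal.bddAbove_range _) (f (n+1))
  refine ⟨⟨dev {x : α // f (n+1) ≤ x}, lt_of_le_of_lt hle ?_⟩, ?_⟩
  · rw [Ordinal.add_one_eq_succ]; exact Order.lt_succ _
  · exact DevLE.of_embed (fun y => (⟨y.1, y.2.1⟩ : {x : α // f (n+1) ≤ x}))
      (fun a b => Iff.rfl) (devLE_dev hD)

/-- chain lemma: strictly descending chain with copies of γ' in each gap forces dev up -/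
theorem dev_lt_of_chain {α γ' : Type u} [Preorder α] [Preorder γ']
    (hα : ∃ o, DevLE α o) (f : ℕ → α) (hdesc : ∀ n, f (n+1) ≤ f n)
    (hstrict : ∀ n, ¬ f n ≤ f (n+1))
    (hemb : ∀ n, ∃ g : γ' → {y : α // f (n+1) ≤ y ∧ y ≤ f n},
      ∀ a b : γ', a ≤ b ↔ g a ≤ g b) :
    dev γ' < dev α := by
  have hd := devLE_dev hα
  rw [DevLE] at hd
  obtain ⟨N, hN⟩ := hd f hdesc
  rcases hN N le_rfl with h | ⟨o', h⟩
  · exact absurd h (hstrict N)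
  · obtain ⟨g, hg⟩ := hemb N
    exact lt_of_le_of_lt (dev_le (DevLE.of_embed g hg h)) o'.2

open MulOpposite

/-- opposite transfer: right ideals of A ↪ left ideals of Aᵐᵒᵖ -/
def opEmb (A : Type u) [Ring A] (J : Submodule Aᵐᵒᵖ A) : Submodule Aᵐᵒᵖ Aᵐᵒᵖ where
  carrier := unop ⁻¹' J
  zero_mem' := J.zero_mem
  add_mem' := fun {a b} ha hb => J.add_mem ha hb
  smul_mem' := by
    intro r y hy
    show (r * y).unop ∈ J
    have : (r * y).unop = y.unop * r.unop := rfl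
    rw [this]
    exact J.smul_mem r hy

theorem opEmb_le {A : Type u} [Ring A] (J K : Submodule Aᵐᵒᵖ A) :
    J ≤ K ↔ opEmb A J ≤ opEmb A K := by
  constructor
  · intro h x hx; exact h hx
  · intro h x hx; exact h (show (op x).unop ∈ J from hx)

theorem wfGT_of_embed {α β : Type*} [PartialOrder α] [PartialOrder β]
    (g : α → β) (hg : ∀ a b : α, a ≤ b ↔ g a ≤ g b) [WellFoundedGT β] :
    WellFoundedGT α := by
  constructor
  have hlt : ∀ a b : α, a < b → g a < g b := by
    intro a b h
    exact lt_of_le_not_ge ((hg a b).1 h.le) (fun hc => h.not_ge ((hg b a).2 hc))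
  have := (IsWellFounded.wf (α := β) (r := (· > ·))).onFun (f := g)
  exact Subrelation.wf (fun {a b} h => hlt _ _ h) this

instance wfGT_right (A : Type u) [Ring A] [IsNoetherianRing Aᵐᵒᵖ] :
    WellFoundedGT (Submodule Aᵐᵒᵖ A) :=
  wfGT_of_embed (opEmb A) (opEmb_le)

open MulOpposite

variable {S : Type u} [Ring S]

def rAnn (c : S) : Submodule Sᵐᵒᵖ S where
  carrier := {x | c * x = 0}
  zero_mem' := by simp
  add_mem' := by intro a b ha hb; show c * (a + b) = 0; rw [mul_add, ha, hb, add_zero]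
  smul_mem' := by
    intro r x hx
    show c * (x * r.unop) = 0
    rw [← mul_assoc, hx, zero_mul]

theorem mem_rAnn {c x : S} : x ∈ rAnn c ↔ c * x = 0 := Iff.rfl

theorem rAnn_le_rAnn_mul (c d : S) : rAnn c ≤ rAnn (d * c) := by
  intro x hx
  rw [mem_rAnn] at hx ⊢
  rw [mul_assoc, hx, mul_zero]

theorem rAnn_pow_le {x : S} {m n : ℕ} (h : m ≤ n) : rAnn (x ^ m) ≤ rAnn (x ^ n) := by
  obtain ⟨k, rfl⟩ := Nat.exists_eq_add_of_le h
  rw [show x ^ (m + k) = x ^ k * x ^ m by rw [← pow_add, add_comm]]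
  exact rAnn_le_rAnn_mul _ _

theorem exists_max (hwf : WellFoundedGT (Submodule Sᵐᵒᵖ S))
    (T : Set (Submodule Sᵐᵒᵖ S)) (hT : T.Nonempty) :
    ∃ M ∈ T, ∀ X ∈ T, ¬ M < X := by
  obtain ⟨M, hM, h⟩ := (IsWellFounded.wf
    (r := ((· > ·) : Submodule Sᵐᵒᵖ S → _ → Prop))).has_min T hT
  exact ⟨M, hM, fun X hX hlt => h X hX hlt⟩

theorem aux_pow (a b : S) : ∀ n, (a * b) ^ (n + 1) = a * (b * a) ^ n * b := by
  intro n
  induction n with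
  | zero => simp
  | succ k IH =>
    rw [pow_succ, IH, pow_succ]
    simp [mul_assoc]

theorem nil_left (hwf : WellFoundedGT (Submodule Sᵐᵒᵖ S))
    (hprime : ∀ a b : S, (∀ r : S, a * r * b = 0) → a = 0 ∨ b = 0)
    (a : S) (h : ∀ s : S, IsNilpotent (s * a)) : a = 0 := by
  by_contra ha
  obtain ⟨M, ⟨b, ⟨⟨s₀, hs₀⟩, hb0⟩, rfl⟩, hmax⟩ :=
    exists_max hwf {X | ∃ b : S, ((∃ s : S, s * a = b) ∧ b ≠ 0) ∧ rAnn b = X}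
      ⟨rAnn a, a, ⟨⟨1, one_mul a⟩, ha⟩, rfl⟩
  have key : ∀ t : S, t * b ≠ 0 → rAnn (t * b) = rAnn b := by
    intro t ht
    have h1 : rAnn b ≤ rAnn (t * b) := rAnn_le_rAnn_mul b t
    have h2 : ¬ rAnn b < rAnn (t * b) :=
      hmax _ ⟨t * b, ⟨⟨t * s₀, by rw [mul_assoc, hs₀]⟩, ht⟩, rfl⟩
    rcases h1.lt_or_eq with h | h
    · exact absurd h h2
    · exact h.symm
  -- primeness: some b * u * b ≠ 0
  have : ¬ ∀ r : S, b * r * b = 0 := by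
    intro hall
    rcases hprime b b hall with h' | h' <;> exact hb0 h'
  push_neg at this
  obtain ⟨u, hu⟩ := this
  set w := u * b with hw
  have hbw : b * w ≠ 0 := by rw [hw, ← mul_assoc]; exact hu
  have hw0 : w ≠ 0 := fun h' => hbw (by rw [h', mul_zero])
  have hwnil : IsNilpotent w := by
    rw [hw, ← hs₀, ← mul_assoc]; exact h _
  classical
  have hex : ∃ n, w ^ n = 0 := hwnil
  set k := Nat.find hex with hk
  have hk0 : w ^ k = 0 := Nat.find_spec hex
  have hk2 : 2 ≤ k := by
    rcases Nat.lt_or_ge k 2 with h' | h'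
    · interval_cases k
      · exact absurd (by simpa using hk0) (fun h1 => hb0 (by
          calc b = b * 1 := (mul_one b).symm
          _ = b * 0 := by rw [h1]
          _ = 0 := mul_zero b))
      · exact absurd (by simpa using hk0) hw0
    · exact h'
  have hk1 : w ^ (k - 1) ≠ 0 := Nat.find_min hex (by omega)
  have hfact : w ^ (k - 1) = (w ^ (k - 2) * u) * b := by
    rw [mul_assoc, ← hw, ← pow_succ]
    congr 1
    omega
  have := key (w ^ (k - 2) * u) (by rw [← hfact]; exact hk1)
  have hwin : w ∈ rAnn (w ^ (k - 1) : S) := by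
    rw [mem_rAnn, ← pow_succ]
    rw [show k - 1 + 1 = k by omega]
    exact hk0
  rw [hfact] at hwin
  rw [this] at hwin
  exact hbw (mem_rAnn.mp hwin)

theorem exists_nonnil (hwf : WellFoundedGT (Submodule Sᵐᵒᵖ S))
    (hprime : ∀ a b : S, (∀ r : S, a * r * b = 0) → a = 0 ∨ b = 0)
    (K : Submodule Sᵐᵒᵖ S) (hK : K ≠ ⊥) : ∃ x ∈ K, ¬ IsNilpotent x := by
  by_contra hcon
  push_neg at hcon
  obtain ⟨a, haK, ha⟩ := Submodule.exists_mem_ne_zero_of_ne_bot hK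
  refine ha (nil_left hwf hprime a (fun s => ?_))
  have has : a * s ∈ K := K.smul_mem (op s) haK
  obtain ⟨m, hm⟩ := hcon _ has
  exact ⟨m + 1, by rw [aux_pow, hm, mul_zero, zero_mul]⟩

theorem exists_stab (hwf : WellFoundedGT (Submodule Sᵐᵒᵖ S))
    (hprime : ∀ a b : S, (∀ r : S, a * r * b = 0) → a = 0 ∨ b = 0)
    (K : Submodule Sᵐᵒᵖ S) (hK : K ≠ ⊥) :
    ∃ b ∈ K, b ≠ 0 ∧ rAnn b = rAnn (b * b) := by
  obtain ⟨x, hxK, hx⟩ := exists_nonnil hwf hprime K hK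
  obtain ⟨M, ⟨m, rfl⟩, hmax⟩ := exists_max hwf {X | ∃ n : ℕ, rAnn (x ^ (n + 1)) = X}
    ⟨rAnn (x ^ 1), 0, rfl⟩
  refine ⟨x ^ (m + 1), ?_, ?_, ?_⟩
  · rw [show x ^ (m + 1) = x * x ^ m by rw [pow_succ']]
    exact K.smul_mem (op (x ^ m)) hxK
  · intro h'; exact hx ⟨m + 1, h'⟩
  · rw [← pow_add]
    have h1 : rAnn (x ^ (m + 1)) ≤ rAnn (x ^ (m + 1 + (m + 1))) := rAnn_pow_le (by omega)
    have h2 : ¬ rAnn (x ^ (m + 1)) < rAnn (x ^ (m + 1 + (m + 1))) :=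
      hmax _ ⟨m + 1 + m, by rw [show m + 1 + m + 1 = m + 1 + (m + 1) by omega]⟩
    rcases h1.lt_or_eq with h | h
    · exact absurd h h2
    · exact h

/-- key construction: a nonzero two-sided ideal of a prime right-Noetherian ring
contains an element with zero right annihilator -/
theorem exists_reg (hwf : WellFoundedGT (Submodule Sᵐᵒᵖ S))
    (hprime : ∀ a b : S, (∀ r : S, a * r * b = 0) → a = 0 ∨ b = 0)
    (I' : Submodule Sᵐᵒᵖ S) (hleft : ∀ s x : S, x ∈ I' → s * x ∈ I') (hne : I' ≠ ⊥) :
    ∃ c ∈ I', c ≠ 0 ∧ rAnn c = ⊥ := by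
  classical
  let Inv : S → Submodule Sᵐᵒᵖ S → Prop := fun c V =>
    c ∈ I' ∧ c ≠ 0 ∧ rAnn c = rAnn (c * c) ∧ V ⊓ rAnn c = ⊥
  have step : ∀ c V, Inv c V → rAnn c ⊓ I' ≠ ⊥ → ∃ c' V', Inv c' V' ∧ V < V' := by
    rintro c V ⟨hcI, hc0, hcstab, hcV⟩ hKne
    obtain ⟨b, hbK, hb0, hbstab⟩ := exists_stab hwf hprime _ hKne
    obtain ⟨hbc, hbI⟩ : b ∈ rAnn c ∧ b ∈ I' := hbK
    have hcb : c * b = 0 := mem_rAnn.mp hbc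
    have hbb : b * b ≠ 0 := by
      intro h'
      refine hb0 ?_
      have h1 : (1 : S) ∈ rAnn (b * b) := mem_rAnn.mpr (by rw [mul_one]; exact h')
      rw [← hbstab, mem_rAnn, mul_one] at h1
      exact h1
    have hcc : c * c ≠ 0 := by
      intro h'
      refine hc0 ?_
      have h1 : (1 : S) ∈ rAnn (c * c) := mem_rAnn.mpr (by rw [mul_one]; exact h')
      rw [← hcstab, mem_rAnn, mul_one] at h1
      exact h1
    -- key splitting fact
    have hsplit : ∀ x : S, (c + b) * x = 0 → c * x = 0 ∧ b * x = 0 := by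
      intro x hx'
      have h1 : c * x = 0 := by
        have h2 : c * ((c + b) * x) = 0 := by rw [hx', mul_zero]
        rw [← mul_assoc, mul_add, hcb, add_zero, mul_assoc] at h2
        have h3 : x ∈ rAnn (c * c) := mem_rAnn.mpr (by rw [mul_assoc]; exact h2)
        rw [← hcstab, mem_rAnn] at h3
        exact h3
      refine ⟨h1, ?_⟩
      have := hx'
      rw [add_mul, h1, zero_add] at this
      exact this
    have hann : rAnn (c + b) = rAnn c ⊓ rAnn b := by
      apply le_antisymm
      · intro x hx
        obtain ⟨h1, h2⟩ := hsplit x (mem_rAnn.mp hx)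
        exact ⟨mem_rAnn.mpr h1, mem_rAnn.mpr h2⟩
      · rintro x ⟨h1, h2⟩
        have h1' : c * x = 0 := h1
        have h2' : b * x = 0 := h2
        exact mem_rAnn.mpr (by rw [add_mul, h1', h2', add_zero])
    refine ⟨c + b, V ⊔ Submodule.span Sᵐᵒᵖ {b}, ⟨I'.add_mem hcI hbI, ?_, ?_, ?_⟩, ?_⟩
    · -- c + b ≠ 0
      intro h'
      have h2 : c * (c + b) = 0 := by rw [h', mul_zero]
      rw [mul_add, hcb, add_zero] at h2
      exact hcc h2
    · -- stability for c + b
      apply le_antisymm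
      · exact rAnn_le_rAnn_mul _ _
      · intro x hx
        have hx' : (c + b) * ((c + b) * x) = 0 := by
          rw [← mul_assoc]; exact mem_rAnn.mp hx
        obtain ⟨hc1, hb1⟩ := hsplit _ hx'
        rw [add_mul, mul_add, ← mul_assoc c b x, hcb, zero_mul, add_zero, ← mul_assoc] at hc1
        -- hc1 : c * c * x = 0
        have h1 : c * x = 0 := by
          have h3 : x ∈ rAnn (c * c) := mem_rAnn.mpr hc1
          rw [← hcstab, mem_rAnn] at h3
          exact h3
        have h2 : b * x = 0 := by
          rw [add_mul, mul_add, h1, mul_zero, zero_add, ← mul_assoc] at hb1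
          have h3 : x ∈ rAnn (b * b) := mem_rAnn.mpr hb1
          rw [← hbstab, mem_rAnn] at h3
          exact h3
        exact mem_rAnn.mpr (by rw [add_mul, h1, h2, add_zero])
    · -- (V ⊔ span {b}) ⊓ rAnn (c+b) = ⊥
      rw [eq_bot_iff]
      rintro x ⟨hxV, hxA⟩
      obtain ⟨hxc, hxb⟩ := hsplit x (mem_rAnn.mp hxA)
      obtain ⟨v, hv, y, hy, rfl⟩ := Submodule.mem_sup.mp hxV
      obtain ⟨r, rfl⟩ := Submodule.mem_span_singleton.mp hy
      -- r • b = b * r.unop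
      have hrb : (r • b : S) = b * r.unop := rfl
      have hcv : c * v = 0 := by
        have := hxc
        rw [mul_add, hrb, ← mul_assoc, hcb, zero_mul, add_zero] at this
        exact this
      have hv0 : v = 0 := by
        have : v ∈ V ⊓ rAnn c := ⟨hv, mem_rAnn.mpr hcv⟩
        rw [hcV] at this
        exact this
      subst hv0
      rw [zero_add] at hxb ⊢
      rw [hrb] at hxb ⊢
      have : r.unop ∈ rAnn (b * b) := mem_rAnn.mpr (by rw [mul_assoc]; exact hxb)
      rw [← hbstab, mem_rAnn] at this
      rw [this]
      exact Submodule.zero_mem _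
    · -- V < V ⊔ span {b}
      refine lt_of_le_of_ne le_sup_left (fun h' => ?_)
      have hbV : b ∈ V := by
        rw [h']
        exact Submodule.mem_sup_right (Submodule.mem_span_singleton_self b)
      have : b ∈ V ⊓ rAnn c := ⟨hbV, hbc⟩
      rw [hcV] at this
      exact hb0 this
  -- initialization
  obtain ⟨c₀, hc₀I, hc₀0, hc₀stab⟩ := exists_stab hwf hprime I' hne
  -- maximal V
  obtain ⟨V₀, ⟨c, hc⟩, hmax⟩ := exists_max hwf {V | ∃ c, Inv c V}
    ⟨⊥, c₀, hc₀I, hc₀0, hc₀stab, bot_inf_eq _⟩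
  have hKbot : rAnn c ⊓ I' = ⊥ := by
    by_contra hne'
    obtain ⟨c', V', hInv', hlt⟩ := step c V₀ hc hne'
    exact hmax V' ⟨c', hInv'⟩ hlt
  obtain ⟨hcI, hc0, -, -⟩ := hc
  refine ⟨c, hcI, hc0, ?_⟩
  -- rAnn c = ⊥ via primeness
  rw [eq_bot_iff]
  intro x hx
  obtain ⟨q, hqI, hq0⟩ := Submodule.exists_mem_ne_zero_of_ne_bot hne
  have hall : ∀ r : S, x * r * q = 0 := by
    intro r
    have h1 : x * r * q ∈ I' := by
      rw [mul_assoc]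
      exact hleft x _ (hleft r q hqI)
    have h2 : x * r * q ∈ rAnn c := by
      rw [mem_rAnn]
      rw [← mul_assoc, ← mul_assoc, mem_rAnn.mp hx, zero_mul, zero_mul]
    have : x * r * q ∈ rAnn c ⊓ I' := ⟨h2, h1⟩
    rw [hKbot] at this
    exact this
  rcases hprime x q hall with h' | h'
  · rw [h']; exact Submodule.zero_mem _
  · exact absurd h' hq0

end Toolkit

section Chain
open MulOpposite
variable {S : Type u} [Ring S]

/-- left multiplication as a right-module endomorphism -/
def lmulS (c : S) : S →ₗ[Sᵐᵒᵖ] S where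
  toFun := fun x => c * x
  map_add' := mul_add c
  map_smul' := by
    intro r x
    show c * (x * r.unop) = (c * x) * r.unop
    rw [mul_assoc]

theorem lmulS_apply (c x : S) : lmulS c x = c * x := rfl

theorem dev_lt_abstract {γ' : Type u} [Preorder γ']
    (hwf : WellFoundedGT (Submodule Sᵐᵒᵖ S))
    (hprime : ∀ a b : S, (∀ r : S, a * r * b = 0) → a = 0 ∨ b = 0)
    (I' : Submodule Sᵐᵒᵖ S) (hleft : ∀ s x : S, x ∈ I' → s * x ∈ I')
    (hne : I' ≠ ⊥) (hproper : (1 : S) ∉ I')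
    (e : γ' → Submodule Sᵐᵒᵖ S) (he : ∀ a b : γ', a ≤ b ↔ e a ≤ e b)
    (heI : ∀ X : γ', I' ≤ e X) :
    dev γ' < dev (Submodule Sᵐᵒᵖ S) := by
  haveI := hwf
  obtain ⟨c, hcI, hc0, hcann⟩ := exists_reg hwf hprime I' hleft hne
  have hker : ∀ n : ℕ, ∀ x : S, c ^ n * x = 0 → x = 0 := by
    intro n
    induction n with
    | zero => intro x hx; simpa using hx
    | succ k IH =>
      intro x hx
      rw [pow_succ', mul_assoc] at hx
      have h1 : c ^ k * x ∈ rAnn c := mem_rAnn.mpr hx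
      rw [hcann, Submodule.mem_bot] at h1
      exact IH x h1
  have hinj : ∀ n : ℕ, Function.Injective (lmulS (c ^ n) : S →ₗ[Sᵐᵒᵖ] S) := by
    intro n x y h
    have h' : c ^ n * (x - y) = 0 := by
      rw [mul_sub, show c ^ n * x = c ^ n * y from h, sub_self]
    have := hker n _ h'
    exact sub_eq_zero.mp this
  set f : ℕ → Submodule Sᵐᵒᵖ S := fun n => Submodule.map (lmulS (c ^ n)) ⊤ with hfdef
  apply dev_lt_of_chain (hasDev) f
  · -- descending
    intro n x hx
    obtain ⟨s, -, rfl⟩ := hx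
    refine ⟨c * s, trivial, ?_⟩
    rw [lmulS_apply, lmulS_apply, ← mul_assoc, ← pow_succ]
  · -- strict
    intro n hle
    have h1 : c ^ n ∈ f n := ⟨1, trivial, mul_one _⟩
    obtain ⟨s, -, hs⟩ := hle h1
    rw [lmulS_apply] at hs
    have h2 : c ^ n * (c * s - 1) = 0 := by
      rw [mul_sub, ← mul_assoc, ← pow_succ, hs, mul_one, sub_self]
    have h3 : c * s = 1 := by
      have := hker n _ h2
      rw [sub_eq_zero] at this
      exact this
    exact hproper (h3 ▸ I'.smul_mem (op s) hcI)
  · -- gap embeddings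
    intro n
    refine ⟨fun X => ⟨Submodule.map (lmulS (c ^ n)) (e X), ?_, ?_⟩, ?_⟩
    · intro y hy
      obtain ⟨s, -, rfl⟩ := hy
      refine ⟨c * s, heI X (I'.smul_mem (op s) hcI), ?_⟩
      rw [lmulS_apply, lmulS_apply, ← mul_assoc, ← pow_succ]
    · exact Submodule.map_mono le_top
    · intro a b
      exact (he a b).trans (Submodule.map_le_map_iff_of_injective (hinj n) _ _).symm

end Chain

section Quot
open MulOpposite

variable {A B : Type u} [Ring A] [Ring B]

/-- pullback of a right ideal along a ring hom -/
def comapRt (f : A →+* B) (X : Submodule Bᵐᵒᵖ B) : Submodule Aᵐᵒᵖ A where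
  carrier := f ⁻¹' X
  zero_mem' := by
    show f 0 ∈ X
    rw [map_zero]; exact X.zero_mem
  add_mem' := by
    intro a b ha hb
    show f (a + b) ∈ X
    rw [map_add]; exact X.add_mem ha hb
  smul_mem' := by
    intro r x hx
    show f (x * r.unop) ∈ X
    rw [map_mul]
    exact X.smul_mem (op (f r.unop)) hx

theorem comapRt_le {f : A →+* B} (hf : Function.Surjective f)
    (X Y : Submodule Bᵐᵒᵖ B) : X ≤ Y ↔ comapRt f X ≤ comapRt f Y := by
  constructor
  · intro h x hx; exact h hx
  · intro h x hx
    obtain ⟨a, rfl⟩ := hf x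
    exact h (show f a ∈ X from hx)

end Quot

section Main
open MulOpposite

variable {R : Type u} [Ring R]

theorem mkq_eq (P : TwoSidedIdeal R) (x y : R) :
    P.ringCon.mk' x = P.ringCon.mk' y ↔ x - y ∈ P := by
  rw [show (P.ringCon.mk' x = P.ringCon.mk' y) ↔ P.ringCon x y from Con.eq _,
    TwoSidedIdeal.rel_iff]

theorem mkq_surj (P : TwoSidedIdeal R) : Function.Surjective P.ringCon.mk' :=
  Con.mk'_surjective

theorem mkq_zero_iff (P : TwoSidedIdeal R) (x : R) :
    P.ringCon.mk' x = 0 ↔ x ∈ P := by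
  rw [show (0 : P.ringCon.Quotient) = P.ringCon.mk' 0 from (map_zero _).symm,
    mkq_eq, sub_zero]

theorem quot_wf [IsNoetherianRing Rᵐᵒᵖ] (P : TwoSidedIdeal R) :
    WellFoundedGT (Submodule (P.ringCon.Quotient)ᵐᵒᵖ P.ringCon.Quotient) :=
  wfGT_of_embed (comapRt P.ringCon.mk') (comapRt_le (mkq_surj P))

theorem quot_prime (P : TwoSidedIdeal R) (hP : IsPrimeT P) :
    ∀ a b : P.ringCon.Quotient, (∀ r, a * r * b = 0) → a = 0 ∨ b = 0 := by
  intro a b h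
  obtain ⟨x, rfl⟩ := mkq_surj P a
  obtain ⟨y, rfl⟩ := mkq_surj P b
  have h' : ∀ u : R, x * u * y ∈ P := by
    intro u
    have := h (P.ringCon.mk' u)
    rw [← map_mul, ← map_mul, mkq_zero_iff] at this
    exact this
  rcases hP.2 x y h' with h'' | h''
  · exact Or.inl ((mkq_zero_iff P x).mpr h'')
  · exact Or.inr ((mkq_zero_iff P y).mpr h'')

variable (P Q : TwoSidedIdeal R)

/-- the image of `Q` in `R ⧸ P` as a right ideal -/
def imQ : Submodule (P.ringCon.Quotient)ᵐᵒᵖ P.ringCon.Quotient where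
  carrier := P.ringCon.mk' '' Q
  zero_mem' := ⟨0, Q.zero_mem, map_zero _⟩
  add_mem' := by
    rintro a b ⟨qa, hqa, rfl⟩ ⟨qb, hqb, rfl⟩
    exact ⟨qa + qb, Q.add_mem hqa hqb, map_add _ _ _⟩
  smul_mem' := by
    rintro r x ⟨q, hq, rfl⟩
    obtain ⟨s, hs⟩ := mkq_surj P r.unop
    refine ⟨q * s, Q.mul_mem_right _ _ hq, ?_⟩
    show P.ringCon.mk' (q * s) = P.ringCon.mk' q * r.unop
    rw [map_mul, hs]

theorem mem_imQ (hPQ : P ≤ Q) (x : R) : P.ringCon.mk' x ∈ imQ P Q ↔ x ∈ Q := by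
  constructor
  · rintro ⟨q, hq, hqx⟩
    have : q - x ∈ P := (mkq_eq P q x).mp hqx
    have h2 : q - x ∈ Q := hPQ this
    have : x = q - (q - x) := (sub_sub_cancel q x).symm
    rw [this]
    exact Q.sub_mem hq h2
  · intro hx
    exact ⟨x, hx, rfl⟩

theorem imQ_left (s x : P.ringCon.Quotient) (hx : x ∈ imQ P Q) : s * x ∈ imQ P Q := by
  obtain ⟨q, hq, rfl⟩ := hx
  obtain ⟨u, rfl⟩ := mkq_surj P s
  exact ⟨u * q, Q.mul_mem_left _ _ hq, map_mul _ _ _⟩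

theorem one_notin_primeT (hQ : (Q : Set R) ≠ Set.univ) : (1 : R) ∉ Q := by
  intro h1
  apply hQ
  ext x
  simp only [Set.mem_univ, iff_true]
  have := Q.mul_mem_left x 1 h1
  rwa [mul_one] at this

theorem imQ_ne_bot (hPQ : P < Q) : imQ P Q ≠ ⊥ := by
  have : ¬ (Q : Set R) ⊆ (P : Set R) := by
    intro hc
    exact hPQ.not_ge (fun x hx => hc hx)
  obtain ⟨q, hq, hqP⟩ := Set.not_subset.mp this
  intro hbot
  have h1 : P.ringCon.mk' q ∈ imQ P Q := ⟨q, hq, rfl⟩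
  rw [hbot, Submodule.mem_bot, mkq_zero_iff] at h1
  exact hqP h1

theorem imQ_proper (hPQ : P ≤ Q) (hQ : (Q : Set R) ≠ Set.univ) :
    (1 : P.ringCon.Quotient) ∉ imQ P Q := by
  intro h1
  rw [show (1 : P.ringCon.Quotient) = P.ringCon.mk' 1 from (map_one _).symm,
    mem_imQ P Q hPQ] at h1
  exact one_notin_primeT Q hQ h1

/-- right ideals of `R ⧸ Q` transferred to right ideals of `R ⧸ P` -/
def eQmap (X : Submodule (Q.ringCon.Quotient)ᵐᵒᵖ Q.ringCon.Quotient) :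
    Submodule (P.ringCon.Quotient)ᵐᵒᵖ P.ringCon.Quotient where
  carrier := P.ringCon.mk' '' (Q.ringCon.mk' ⁻¹' X)
  zero_mem' := ⟨0, by
    show Q.ringCon.mk' 0 ∈ X
    rw [map_zero]; exact X.zero_mem, map_zero _⟩
  add_mem' := by
    rintro a b ⟨xa, hxa, rfl⟩ ⟨xb, hxb, rfl⟩
    refine ⟨xa + xb, ?_, map_add _ _ _⟩
    show Q.ringCon.mk' (xa + xb) ∈ X
    rw [map_add]
    exact X.add_mem hxa hxb
  smul_mem' := by
    rintro r x ⟨a, ha, rfl⟩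
    obtain ⟨s, hs⟩ := mkq_surj P r.unop
    refine ⟨a * s, ?_, ?_⟩
    · show Q.ringCon.mk' (a * s) ∈ X
      rw [map_mul]
      exact X.smul_mem (op (Q.ringCon.mk' s)) ha
    · show P.ringCon.mk' (a * s) = P.ringCon.mk' a * r.unop
      rw [map_mul, hs]

theorem eQmap_le (hPQ : P ≤ Q)
    (X Y : Submodule (Q.ringCon.Quotient)ᵐᵒᵖ Q.ringCon.Quotient) :
    X ≤ Y ↔ eQmap P Q X ≤ eQmap P Q Y := by
  constructor
  · rintro h x ⟨a, ha, rfl⟩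
    exact ⟨a, h ha, rfl⟩
  · intro h x hx
    obtain ⟨r, rfl⟩ := mkq_surj Q x
    have h1 : P.ringCon.mk' r ∈ eQmap P Q X := ⟨r, hx, rfl⟩
    obtain ⟨r', hr', hrr⟩ := h h1
    have h2 : r' - r ∈ P := (mkq_eq P r' r).mp hrr
    have h3 : Q.ringCon.mk' r' = Q.ringCon.mk' r := (mkq_eq Q r' r).mpr (hPQ h2)
    rw [← h3]
    exact hr'

theorem imQ_le_eQmap (hPQ : P ≤ Q)
    (X : Submodule (Q.ringCon.Quotient)ᵐᵒᵖ Q.ringCon.Quotient) :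
    imQ P Q ≤ eQmap P Q X := by
  rintro x ⟨q, hq, rfl⟩
  refine ⟨q, ?_, rfl⟩
  show Q.ringCon.mk' q ∈ X
  rw [(mkq_zero_iff Q q).mpr hq]
  exact X.zero_mem

theorem key_lt [IsNoetherianRing Rᵐᵒᵖ] (hP : IsPrimeT P)
    (hQpr : (Q : Set R) ≠ Set.univ) (hPQ : P < Q) : rKdimQ Q < rKdimQ P := by
  unfold rKdimQ rKdim
  exact dev_lt_abstract (quot_wf P) (quot_prime P hP) (imQ P Q)
    (imQ_left P Q) (imQ_ne_bot P Q hPQ) (imQ_proper P Q hPQ.le hQpr)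
    (eQmap P Q) (eQmap_le P Q hPQ.le) (imQ_le_eQmap P Q hPQ.le)

theorem quot_le_rKdim [IsNoetherianRing Rᵐᵒᵖ] (Q : TwoSidedIdeal R) :
    rKdimQ Q ≤ rKdim R := by
  unfold rKdimQ rKdim
  exact dev_le_dev (comapRt Q.ringCon.mk')
    (fun X Y => comapRt_le (mkq_surj Q) X Y) hasDev

end Main

/-- For primes `P < Q` of a Noetherian ring, `|R/Q|_r < |R/P|_r`; in
particular a prime of full right Krull dimension is minimal. -/
theorem stmt18 (R : Type u) [Ring R] [IsNoetherianRing R] [IsNoetherianRing Rᵐᵒᵖ]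
    (P : TwoSidedIdeal R) (hP : IsPrimeT P) :
    (∀ Q : TwoSidedIdeal R, IsPrimeT Q → P < Q → rKdimQ Q < rKdimQ P) ∧
      (rKdimQ P = rKdim R →
        ∀ Q : TwoSidedIdeal R, IsPrimeT Q → Q ≤ P → Q = P) := by
  constructor
  · intro Q hQ hPQ
    exact key_lt P Q hP hQ.1 hPQ
  · intro hfull Q hQ hQP
    by_contra hne
    have hlt : Q < P := lt_of_le_of_ne hQP hne
    have h1 : rKdimQ P < rKdimQ Q := key_lt Q P hQ hP.1 hlt
    have h2 : rKdimQ Q ≤ rKdim R := quot_le_rKdim Q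
    rw [hfull] at h1
    exact absurd (lt_of_lt_of_le h1 h2) (lt_irrefl _)
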